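/- Let q = 2^m, K = F_{q^2}, conjugation x̄ = x^q, S = {u ∈ K : u·ū = 1}, and 1 < r < m - 1 with gcd(m, r) = 1. The equation ū·u^{2^{m-r}} + u·ū^{2^{m-r}} = 0 has a solution u ∈ S with u ≠ 1 if and only if both m and r are odd. -/

import Mathlib

lemma two_pow_gcd_sub_one : ∀ a b : ℕ, Nat.gcd (2^a - 1) (2^b - 1) = 2^(Nat.gcd a b) - 1 := by
  intro a
  induction a using Nat.strong_induction_on with
  | _ a ih =>
    intro b
    rcases Nat.eq_zero_or_pos a with rfl | ha
    · simp
    · obtain ⟨c, hc⟩ : (2^a - 1) ∣ (2^(a*(b/a)) - 1) := by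
        rw [pow_mul]
        simpa using Nat.sub_dvd_pow_sub_pow (2^a) 1 (b/a)
      have h1a : 1 ≤ 2^a := Nat.one_le_two_pow
      have h1m : 1 ≤ 2^(b % a) := Nat.one_le_two_pow
      have h1d : 1 ≤ 2^(a*(b/a)) := Nat.one_le_two_pow
      have h1b : 1 ≤ 2^b := Nat.one_le_two_pow
      have hsplit : 2^b = 2^(b % a) * 2^(a*(b/a)) := by
        rw [← pow_add]; congr 1; exact (Nat.mod_add_div b a).symm
      have hprod : 1 ≤ 2^(b % a) * 2^(a*(b/a)) := Nat.one_le_iff_ne_zero.mpr (by positivity)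
      have hb : 2^b - 1 = (2^(b % a) - 1) + (2^(b % a) * c) * (2^a - 1) := by
        rw [hsplit]
        zify [h1a, h1m, h1d, hprod] at hc ⊢
        linear_combination (2^(b % a) : ℤ) * hc
      rw [hb, Nat.gcd_add_mul_right_right, Nat.gcd_comm (2^a - 1),
        ih (b % a) (Nat.mod_lt b ha) a]
      conv_rhs => rw [Nat.gcd_rec a b]

lemma three_dvd_odd_pow (n : ℕ) (hn : n % 2 = 1) : 3 ∣ 2^n + 1 := by
  obtain ⟨k, rfl⟩ : ∃ k, n = 2*k+1 := ⟨n/2, by omega⟩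
  have h : 3 ∣ 4^k - 1 := by simpa using Nat.sub_dvd_pow_sub_pow 4 1 k
  have h1 : 1 ≤ 4^k := Nat.one_le_pow _ _ (by norm_num)
  have he : 2^(2*k+1) = 4^k * 2 := by
    rw [pow_succ, pow_mul]; norm_num
  obtain ⟨t, ht⟩ := h
  omega

lemma three_dvd_even_pow (n : ℕ) (hn : n % 2 = 0) : 3 ∣ 2^n - 1 := by
  obtain ⟨k, rfl⟩ : ∃ k, n = 2*k := ⟨n/2, by omega⟩
  have h : 3 ∣ 4^k - 1 := by simpa using Nat.sub_dvd_pow_sub_pow 4 1 k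
  have he : 2^(2*k) = 4^k := by rw [pow_mul]; norm_num
  rwa [he]

theorem solution_iff_m_odd_r_odd (m r : ℕ) (hr : 1 < r) (hrm : r + 1 < m)
    (hgcd : Nat.gcd m r = 1)
    (K : Type*) [Field K] [Fintype K] (hK : Fintype.card K = 2 ^ (2 * m)) :
    (∃ u : K, u ^ (2 ^ m + 1) = 1 ∧ u ≠ 1 ∧
      u ^ (2 ^ m) * u ^ (2 ^ (m - r)) + u * (u ^ (2 ^ m)) ^ (2 ^ (m - r)) = 0) ↔
    Odd m ∧ Odd r := by
  -- characteristic 2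
  classical
  haveI : CharP K (ringChar K) := ringChar.charP K
  obtain ⟨n, hp, hcard⟩ := FiniteField.card K (ringChar K)
  have hchar2 : ringChar K = 2 := by
    have hdvd : ringChar K ∣ 2 ^ (2*m) := by
      rw [← hK, hcard]
      exact dvd_pow_self _ (by positivity)
    exact (Nat.prime_dvd_prime_iff_eq hp Nat.prime_two).mp (hp.dvd_of_dvd_pow hdvd)
  haveI : CharP K 2 := hchar2 ▸ ringChar.charP K
  have h1m : 1 ≤ 2^m := Nat.one_le_two_pow
  have h1mr : 1 ≤ 2^(m-r) := Nat.one_le_two_pow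
  constructor
  · rintro ⟨u, hu1, hune, heq⟩
    have hu0 : u ≠ 0 := by
      rintro rfl
      rw [zero_pow (by positivity)] at hu1
      exact zero_ne_one hu1
    -- from the equation, a = b in char 2
    have heq2 : u ^ (2^m + 2^(m-r)) = u ^ (2^m * 2^(m-r) + 1) := by
      have hab : u ^ (2^m) * u ^ (2^(m-r)) = u * (u ^ (2^m)) ^ (2^(m-r)) := by
        have := CharTwo.add_self_eq_zero (u * (u ^ (2^m)) ^ (2^(m-r)))
        calc u ^ (2^m) * u ^ (2^(m-r))
            = (u ^ (2^m) * u ^ (2^(m-r)) + u * (u ^ (2^m)) ^ (2^(m-r)))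
              + u * (u ^ (2^m)) ^ (2^(m-r)) := by
              rw [add_assoc, this, add_zero]
          _ = u * (u ^ (2^m)) ^ (2^(m-r)) := by rw [heq, zero_add]
      rw [pow_add, hab, add_comm, pow_add, pow_one, ← pow_mul]
    have hABC : 2^m * 2^(m-r) + 1 = (2^m + 2^(m-r)) + (2^(m-r)-1)*(2^m-1) := by
      zify [h1m, h1mr]
      ring
    have hC : u ^ ((2^(m-r)-1)*(2^m-1)) = 1 := by
      have h2 : u ^ (2^m + 2^(m-r)) * u ^ ((2^(m-r)-1)*(2^m-1))
          = u ^ (2^m + 2^(m-r)) * 1 := by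
        rw [mul_one, ← pow_add, ← hABC, heq2]
      exact mul_left_cancel₀ (pow_ne_zero _ hu0) h2
    have hC2 : u ^ ((2^(m-r)-1)*(2^m+1)) = 1 := by
      rw [mul_comm, pow_mul, hu1, one_pow]
    have hmr : u ^ (2^(m-r)-1) = 1 := by
      have := pow_gcd_eq_one.mpr ⟨hC, hC2⟩
      rwa [Nat.gcd_mul_left, Nat.gcd_comm (2^m-1),
        show Nat.gcd (2^m+1) (2^m-1) = 1 from ?_, mul_one] at this
      -- coprimality of 2^m+1 and 2^m-1
      have hg1 := Nat.gcd_dvd_left (2^m+1) (2^m-1)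
      have hg2 := Nat.gcd_dvd_right (2^m+1) (2^m-1)
      have hg3 : Nat.gcd (2^m+1) (2^m-1) ∣ 2 := by
        have := Nat.dvd_sub hg1 hg2
        rwa [show 2^m+1 - (2^m-1) = 2 by omega] at this
      rcases (Nat.dvd_prime Nat.prime_two).mp hg3 with h | h
      · exact h
      · exfalso
        rw [h] at hg2
        have h2d : 2 ∣ 2^m := dvd_pow_self 2 (by omega)
        omega
    have h2m : u ^ (2^(2*m) - 1) = 1 := by
      have : u ^ ((2^m+1)*(2^m-1)) = 1 := by rw [pow_mul, hu1, one_pow]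
      rwa [show (2^m+1)*(2^m-1) = 2^(2*m)-1 by
        have h2 : 2^(2*m) = 2^m * 2^m := by rw [two_mul, pow_add]
        have hpr : 1 ≤ 2^m * 2^m := Nat.one_le_iff_ne_zero.mpr (by positivity)
        rw [h2]
        zify [h1m, hpr]
        ring] at this
    by_contra hno
    -- parity analysis: m - r is odd
    have hm2 : ¬ (m % 2 = 0 ∧ r % 2 = 0) := by
      rintro ⟨h1, h2⟩
      have := Nat.dvd_gcd (Nat.dvd_of_mod_eq_zero h1) (Nat.dvd_of_mod_eq_zero h2)
      rw [hgcd] at this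
      omega
    have hmrodd : (m - r) % 2 = 1 := by
      rcases Nat.even_or_odd m with hme | hmo
      · have hme' := Nat.even_iff.mp hme
        have hro : r % 2 = 1 := by omega
        omega
      · have hre : ¬ Odd r := fun h => hno ⟨hmo, h⟩
        have := Nat.odd_iff.mp hmo
        have := Nat.not_odd_iff_even.mp hre
        have := Nat.even_iff.mp this
        omega
    -- gcd (m - r) (2m) = 1
    have hgmr : Nat.gcd (m - r) (2*m) = 1 := by
      set d := Nat.gcd (m - r) (2*m) with hd
      have hd1 := Nat.gcd_dvd_left (m - r) (2*m)
      have hd2 := Nat.gcd_dvd_right (m - r) (2*m)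
      have hdodd : Odd d := by
        rw [Nat.odd_iff]
        by_contra h
        have h2 : 2 ∣ d := by omega
        obtain ⟨t, ht⟩ := h2.trans hd1
        omega
      have hdm : d ∣ m := (Nat.Coprime.dvd_of_dvd_mul_left hdodd.coprime_two_right hd2)
      have hdr : d ∣ r := by
        have := Nat.dvd_sub hdm hd1
        rwa [show m - (m - r) = r by omega] at this
      have := Nat.dvd_gcd hdm hdr
      rw [hgcd] at this
      exact Nat.dvd_one.mp this
    have hfin : Nat.gcd (2^(m-r)-1) (2^(2*m)-1) = 1 := by
      rw [two_pow_gcd_sub_one, hgmr]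
      norm_num
    have := pow_gcd_eq_one.mpr ⟨hmr, h2m⟩
    rw [hfin, pow_one] at this
    exact hune this
  · rintro ⟨hmo, hro⟩
    have hmo2 := Nat.odd_iff.mp hmo
    have hro2 := Nat.odd_iff.mp hro
    -- element of order 3
    haveI : Fact (Nat.Prime 3) := ⟨by norm_num⟩
    have hcardu : Fintype.card Kˣ = 2^(2*m) - 1 := by
      rw [Fintype.card_units, hK]
    have h3dvd : 3 ∣ Fintype.card Kˣ := by
      rw [hcardu]
      exact three_dvd_even_pow (2*m) (by omega)
    obtain ⟨ζ, hζ⟩ := exists_prime_orderOf_dvd_card 3 h3dvd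
    have hζ3 : (ζ : K) ^ 3 = 1 := by
      have h := pow_orderOf_eq_one ζ
      rw [hζ] at h
      simpa using congrArg (Units.val) h
    refine ⟨(ζ : K), ?_, ?_, ?_⟩
    · obtain ⟨t, ht⟩ := three_dvd_odd_pow m hmo2
      rw [ht, pow_mul, hζ3, one_pow]
    · intro h
      have h1 : ζ = 1 := Units.ext (by simpa using h)
      rw [h1, orderOf_one] at hζ
      omega
    · have e1 : (ζ:K) ^ (2^m) * (ζ:K) ^ (2^(m-r)) = 1 := by
        rw [← pow_add]
        have h3 : 3 ∣ 2^m + 2^(m-r) := by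
          have hsp : 2^m = 2^(m-r) * 2^r := by
            rw [← pow_add]; congr 1; omega
          obtain ⟨t, ht⟩ := three_dvd_odd_pow r hro2
          refine ⟨2^(m-r) * t, ?_⟩
          rw [hsp, show 2^(m-r)*2^r + 2^(m-r) = 2^(m-r)*(2^r+1) from by ring, ht]
          ring
        obtain ⟨t, ht⟩ := h3
        rw [ht, pow_mul, hζ3, one_pow]
      have e2 : (ζ:K) * ((ζ:K) ^ (2^m)) ^ (2^(m-r)) = 1 := by
        rw [← pow_mul, ← pow_add, ← pow_succ']
        have h3 : 3 ∣ 2^(m + (m-r)) + 1 := three_dvd_odd_pow _ (by omega)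
        obtain ⟨t, ht⟩ := h3
        rw [ht, pow_mul, hζ3, one_pow]
      rw [e1, e2]
      exact CharTwo.add_self_eq_zero 1
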